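/- For any a, b > 0, the function φ : ℝ → ℝ given by φ(d) = a·log(1 + e^{−d}) + b·log(1 + e^{d}) is strictly convex and attains its unique global minimum at d* = log(a/b); that is, φ(d) > φ(log(a/b)) for all d ≠ log(a/b). -/

import Mathlib

open Real

lemma phi_hasDerivAt (a b d : ℝ) :
    HasDerivAt (fun d : ℝ => a * Real.log (1 + Real.exp (-d)) + b * Real.log (1 + Real.exp d))
      ((b * Real.exp d - a) / (1 + Real.exp d)) d := by
  have hpos1 : (0:ℝ) < 1 + Real.exp (-d) := by positivity
  have hpos2 : (0:ℝ) < 1 + Real.exp d := by positivity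
  have h1 : HasDerivAt (fun d : ℝ => -d) (-1) d := (hasDerivAt_id d).neg
  have h2 : HasDerivAt (fun d : ℝ => 1 + Real.exp (-d)) (Real.exp (-d) * (-1)) d :=
    h1.exp.const_add 1
  have h3 : HasDerivAt (fun d : ℝ => 1 + Real.exp d) (Real.exp d) d := by
    simpa using (Real.hasDerivAt_exp d).const_add 1
  have h4 := ((h2.log hpos1.ne').const_mul a).add ((h3.log hpos2.ne').const_mul b)
  convert h4 using 1
  · rfl
  · rfl
  · rfl
  rw [Real.exp_neg]
  have he : (0:ℝ) < Real.exp d := Real.exp_pos d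
  field_simp
  ring

/-- for `a, b > 0`, the function
`φ(d) = a·log(1 + e^{−d}) + b·log(1 + e^{d})` is strictly convex on `ℝ` and attains its
unique global minimum at `d* = log(a/b)`: `φ(d) > φ(log(a/b))` for all `d ≠ log(a/b)`. -/
theorem logistic_loss_strictConvex_and_unique_min (a b : ℝ) (ha : 0 < a) (hb : 0 < b) :
    StrictConvexOn ℝ Set.univ
      (fun d : ℝ => a * Real.log (1 + Real.exp (-d)) + b * Real.log (1 + Real.exp d)) ∧
    ∀ d : ℝ, d ≠ Real.log (a / b) →
      a * Real.log (1 + Real.exp (-(Real.log (a / b)))) +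
          b * Real.log (1 + Real.exp (Real.log (a / b))) <
        a * Real.log (1 + Real.exp (-d)) + b * Real.log (1 + Real.exp d) := by
  set φ : ℝ → ℝ := fun d : ℝ => a * Real.log (1 + Real.exp (-d)) + b * Real.log (1 + Real.exp d)
    with hφ
  have hderiv : ∀ d : ℝ, deriv φ d = (b * Real.exp d - a) / (1 + Real.exp d) :=
    fun d => (phi_hasDerivAt a b d).deriv
  have hcont : Continuous φ :=
    continuous_iff_continuousAt.2 fun d => (phi_hasDerivAt a b d).continuousAt
  have hmono : StrictMono (deriv φ) := by
    intro x y hxy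
    rw [hderiv x, hderiv y, div_lt_div_iff₀ (by positivity) (by positivity)]
    have hexy : Real.exp x < Real.exp y := Real.exp_lt_exp.2 hxy
    nlinarith [Real.exp_pos x, Real.exp_pos y, mul_pos (add_pos ha hb) (sub_pos.2 hexy)]
  have hconv : StrictConvexOn ℝ Set.univ φ := by
    apply StrictMonoOn.strictConvexOn_of_deriv convex_univ hcont.continuousOn
    exact fun x _ y _ hxy => hmono hxy
  refine ⟨hconv, fun d hd => ?_⟩
  set m := Real.log (a / b) with hm
  have hem : Real.exp m = a / b := Real.exp_log (div_pos ha hb)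
  show φ m < φ d
  rcases lt_or_gt_of_ne hd with h | h
  · -- d < m : φ strictly anti on Iic m
    have hanti : StrictAntiOn φ (Set.Iic m) := by
      apply strictAntiOn_of_deriv_neg (convex_Iic m) hcont.continuousOn
      intro x hx
      rw [interior_Iic] at hx
      rw [hderiv x]
      apply div_neg_of_neg_of_pos _ (by positivity)
      have : Real.exp x < a / b := hem ▸ Real.exp_lt_exp.2 hx
      have := (div_lt_div_iff₀ (by norm_num : (0:ℝ) < 1) hb).1 (by simpa using this)
      nlinarith
    exact hanti (Set.mem_Iic.2 h.le) (Set.mem_Iic.2 le_rfl) h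
  · have hmonoφ : StrictMonoOn φ (Set.Ici m) := by
      apply strictMonoOn_of_deriv_pos (convex_Ici m) hcont.continuousOn
      intro x hx
      rw [interior_Ici] at hx
      rw [hderiv x]
      apply div_pos _ (by positivity)
      have : a / b < Real.exp x := hem ▸ Real.exp_lt_exp.2 hx
      have := (div_lt_div_iff₀ hb (by norm_num : (0:ℝ) < 1)).1 (by simpa using this)
      nlinarith
    exact hmonoφ (Set.mem_Ici.2 le_rfl) (Set.mem_Ici.2 h.le) h
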